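/- There is a universal constant C such that the following holds for all n, m, ℓ and ε > 0. If a property P of Boolean functions on {0,1}^n is testable with proximity parameter ε using m samples — i.e., there exists T : ({0,1}^n × {0,1})^m × {0,1}^ℓ → {0,1} such that on m i.i.d. uniform samples x_i with labels f(x_i) and a uniform seed, T outputs 1 with probability at least 2/3 whenever f ∈ P and outputs 0 with probability at least 2/3 whenever f is not in P_ε — then there exist a natural number k ≤ 2^{2^{C·m}}, a partition of {0,1}^n into disjoint parts S_1, ..., S_k, and a property Q that is k-part symmetric with respect to this partition, such that P ⊆ Q ⊆ P_ε. -/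

import Mathlib

/-- Probability that the randomized tester `T` outputs `1` (Accept) on `m` i.i.d.
uniform samples from `{0,1}^n` labeled by `f`, with a uniform seed in `{0,1}^ℓ`. -/
noncomputable def acceptProb (n m l : ℕ)
    (T : (Fin m → (Fin n → Bool)) → (Fin m → Bool) → (Fin l → Bool) → Bool)
    (f : (Fin n → Bool) → Bool) : ℝ :=
  (∑ x : Fin m → (Fin n → Bool), ∑ r : Fin l → Bool,
      if T x (fun i => f (x i)) r then (1 : ℝ) else 0) / ((2 : ℝ) ^ (n * m) * 2 ^ l)

/-- Normalized Hamming distance between Boolean functions on `{0,1}^n`. -/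
noncomputable def fdist (n : ℕ) (f g : (Fin n → Bool) → Bool) : ℝ :=
  ((Finset.univ.filter fun x => f x ≠ g x).card : ℝ) / 2 ^ n

/-- `closeTo n P ε` is `P_ε`: the Boolean functions within distance `ε` of `P`. -/
def closeTo (n : ℕ) (P : Set ((Fin n → Bool) → Bool)) (ε : ℝ) :
    Set ((Fin n → Bool) → Bool) :=
  {f | ∃ g ∈ P, fdist n f g ≤ ε}

/-- `T` is a valid sample-based tester for `P` with proximity `ε`. -/
def isValidTester (n m l : ℕ) (P : Set ((Fin n → Bool) → Bool)) (ε : ℝ)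
    (T : (Fin m → (Fin n → Bool)) → (Fin m → Bool) → (Fin l → Bool) → Bool) : Prop :=
  (∀ f ∈ P, 2 / 3 ≤ acceptProb n m l T f) ∧
  (∀ f, f ∉ closeTo n P ε → acceptProb n m l T f ≤ 1 / 3)

/-- Density of `f` on the part `S`: `E_{x uniform}[f(x)·1[x ∈ S]]`. -/
noncomputable def density (n : ℕ) (S : Finset (Fin n → Bool))
    (f : (Fin n → Bool) → Bool) : ℝ :=
  (∑ x ∈ S, if f x then (1 : ℝ) else 0) / 2 ^ n

namespace Stmt13Aux

variable {V : Type*} [Fintype V] [DecidableEq V] {m : ℕ}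

noncomputable def ip (m : ℕ) (W W' : (Fin m → V) → ℝ) : ℝ := ∑ y : Fin m → V, W y * W' y

noncomputable def tp1 (U : Fin m → Finset V) : (Fin m → V) → ℝ :=
  fun y => ∏ i, if y i ∈ U i then (1:ℝ) else 0

lemma tp1_nonneg (U : Fin m → Finset V) (y : Fin m → V) : 0 ≤ tp1 U y :=
  Finset.prod_nonneg fun i _ => by split <;> norm_num

lemma tp1_le_one (U : Fin m → Finset V) (y : Fin m → V) : tp1 U y ≤ 1 :=
  Finset.prod_le_one (fun i _ => by split <;> norm_num) (fun i _ => by split <;> norm_num)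

lemma tp1_sq (U : Fin m → Finset V) (y : Fin m → V) : tp1 U y * tp1 U y = tp1 U y := by
  unfold tp1
  rw [← Finset.prod_mul_distrib]
  refine Finset.prod_congr rfl fun i _ => ?_
  split <;> norm_num

lemma ip_nonneg_self (W : (Fin m → V) → ℝ) : 0 ≤ ip m W W :=
  Finset.sum_nonneg fun y _ => mul_self_nonneg _

lemma ip_self_eq_zero {W : (Fin m → V) → ℝ} (h : ip m W W ≤ 0) (W' : (Fin m → V) → ℝ) :
    ip m W W' = 0 := by
  have h0 : ip m W W = 0 := le_antisymm h (ip_nonneg_self W)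
  have hy : ∀ y ∈ Finset.univ, W y * W y = (0:ℝ) := by
    rw [← Finset.sum_eq_zero_iff_of_nonneg (fun y _ => mul_self_nonneg (W y))]
    exact h0
  refine Finset.sum_eq_zero fun y _ => ?_
  have := hy y (Finset.mem_univ y)
  have : W y = 0 := by nlinarith [this]
  rw [this]; ring

lemma greedy (θ M : ℝ) (hθ : 0 < θ) (hM : 0 < M)
    (hMU : ∀ U : Fin m → Finset V, ip m (tp1 U) (tp1 U) ≤ M) :
    ∀ (B : ℕ) (W : (Fin m → V) → ℝ), ip m W W ≤ B * (θ^2/M) →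
    ∃ (c : Fin B → ℝ) (S : Fin B → Fin m → Finset V),
      ∀ U : Fin m → Finset V,
        |ip m (fun y => W y - ∑ t, c t * tp1 (S t) y) (tp1 U)| ≤ θ := by
  intro B
  induction B with
  | zero =>
    intro W hW
    refine ⟨Fin.elim0, Fin.elim0, fun U => ?_⟩
    have : (fun y => W y - ∑ t : Fin 0, Fin.elim0 t * tp1 (Fin.elim0 t) y) = W := by
      funext y; simp
    rw [this, ip_self_eq_zero (by simpa using hW) (tp1 U), abs_zero]
    exact le_of_lt hθ
  | succ B ih =>
    intro W hW
    by_cases hc : ∀ U : Fin m → Finset V, |ip m W (tp1 U)| ≤ θ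
    · refine ⟨fun _ => 0, fun _ _ => ∅, fun U => ?_⟩
      have : (fun y => W y - ∑ t : Fin (B+1), (0:ℝ) * tp1 (fun _ => (∅ : Finset V)) y) = W := by
        funext y; simp
      rw [this]; exact hc U
    · push_neg at hc
      obtain ⟨U0, hU0⟩ := hc
      set a := ip m W (tp1 U0) with ha
      set e0 := ip m (tp1 U0) (tp1 U0) with he0
      have he0pos : 0 < e0 := by
        rcases lt_or_eq_of_le (ip_nonneg_self (tp1 U0)) with h | h
        · exact h
        · exfalso
          have : ip m (tp1 U0) W = 0 := ip_self_eq_zero (le_of_eq h.symm) W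
          have haz : a = 0 := by
            rw [ha]
            rw [← this]
            unfold ip; exact Finset.sum_congr rfl fun y _ => mul_comm _ _
          rw [haz] at hU0; simp at hU0; linarith
      set c0 := a / e0 with hc0
      set W' := fun y => W y - c0 * tp1 U0 y with hW'
      have expand : ip m W' W' = ip m W W - 2*c0*a + c0^2 * e0 := by
        have : ∀ y : Fin m → V, W' y * W' y
            = W y * W y - 2*c0*(W y * tp1 U0 y) + c0^2*(tp1 U0 y * tp1 U0 y) := by
          intro y; rw [hW']; ring
        unfold ip
        rw [Finset.sum_congr rfl fun y _ => this y]
        rw [Finset.sum_add_distrib, Finset.sum_sub_distrib, ← Finset.mul_sum, ← Finset.mul_sum]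
        rfl
      have energy : ip m W' W' = ip m W W - a^2/e0 := by
        rw [expand, hc0]; field_simp; ring
      have hdrop : θ^2/M ≤ a^2/e0 := by
        have h1 : θ^2 ≤ a^2 := by
          have := abs_nonneg (ip m W (tp1 U0))
          nlinarith [sq_abs a, hU0.le]
        have h2 : e0 ≤ M := hMU U0
        have h1' : 0 ≤ a^2 := sq_nonneg a
        gcongr
      have hW'le : ip m W' W' ≤ B * (θ^2/M) := by
        rw [energy]
        have : ((B:ℝ)+1) * (θ^2/M) - θ^2/M ≤ (B:ℝ) * (θ^2/M) := by ring_nf; rfl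
        push_cast at hW ⊢
        linarith
      obtain ⟨c', S', hres⟩ := ih W' hW'le
      refine ⟨Fin.cons c0 c', Fin.cons U0 S', fun U => ?_⟩
      have : (fun y => W y - ∑ t : Fin (B+1), (Fin.cons c0 c' : Fin (B+1) → ℝ) t
              * tp1 ((Fin.cons U0 S' : Fin (B+1) → Fin m → Finset V) t) y)
          = (fun y => W' y - ∑ t : Fin B, c' t * tp1 (S' t) y) := by
        funext y
        rw [hW']
        simp only [Fin.sum_univ_succ, Fin.cons_zero, Fin.cons_succ]
        ring
      rw [this]
      exact hres U

lemma ip_tp1_le (U : Fin m → Finset V) :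
    ip m (tp1 U) (tp1 U) ≤ (Fintype.card V : ℝ) ^ m := by
  unfold ip
  calc ∑ y : Fin m → V, tp1 U y * tp1 U y ≤ ∑ y : Fin m → V, 1 := by
        refine Finset.sum_le_sum fun y _ => ?_
        rw [tp1_sq]; exact tp1_le_one U y
    _ = (Fintype.card V : ℝ) ^ m := by
        rw [Finset.sum_const, Finset.card_univ]
        simp [Fintype.card_fun]

lemma ip_tp1_factor (S U : Fin m → Finset V) :
    ip m (tp1 S) (tp1 U)
      = ∏ i, ∑ v : V, (if v ∈ S i then (1:ℝ) else 0) * (if v ∈ U i then 1 else 0) := by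
  unfold ip tp1
  rw [Finset.prod_univ_sum]
  rw [Fintype.piFinset_univ]
  exact Finset.sum_congr rfl fun y _ => (Finset.prod_mul_distrib).symm

lemma ip_sub_left (W D u : (Fin m → V) → ℝ) :
    ip m (fun y => W y - D y) u = ip m W u - ip m D u := by
  unfold ip
  rw [← Finset.sum_sub_distrib]
  exact Finset.sum_congr rfl fun y _ => by ring

lemma ip_sum_left {k : ℕ} (D : Fin k → (Fin m → V) → ℝ) (u : (Fin m → V) → ℝ) :
    ip m (fun y => ∑ t, D t y) u = ∑ t, ip m (D t) u := by
  unfold ip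
  rw [Finset.sum_comm]
  exact Finset.sum_congr rfl fun y _ => by rw [Finset.sum_mul]

lemma ip_smul_left (c : ℝ) (W u : (Fin m → V) → ℝ) :
    ip m (fun y => c * W y) u = c * ip m W u := by
  unfold ip
  rw [Finset.mul_sum]
  exact Finset.sum_congr rfl fun y _ => by ring

end Stmt13Aux

namespace Stmt13Key

open Stmt13Aux Finset

variable (n m l : ℕ)

abbrev XX (n : ℕ) := Fin n → Bool
abbrev VV (n : ℕ) := (Fin n → Bool) × Bool

noncomputable def Ker (T : (Fin m → XX n) → (Fin m → Bool) → (Fin l → Bool) → Bool) :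
    (Fin m → VV n) → ℝ :=
  fun y => (∑ r : Fin l → Bool,
    if T (fun i => (y i).1) (fun i => (y i).2) r then (1:ℝ) else 0) / 2^l

def graphF (f : XX n → Bool) : Finset (VV n) :=
  Finset.univ.filter (fun v => f v.1 = v.2)

lemma accept_eq (T : (Fin m → XX n) → (Fin m → Bool) → (Fin l → Bool) → Bool)
    (f : XX n → Bool) :
    acceptProb n m l T f
      = ip m (Ker n m l T) (tp1 (fun _ => graphF n f)) / 2^(n*m) := by
  have h1 : ip m (Ker n m l T) (tp1 (fun _ => graphF n f))
      = ∑ y ∈ Finset.univ.filter (fun y : Fin m → VV n => ∀ i, f (y i).1 = (y i).2),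
          Ker n m l T y := by
    unfold ip tp1
    rw [Finset.sum_filter]
    refine Finset.sum_congr rfl fun y _ => ?_
    by_cases h : ∀ i, f (y i).1 = (y i).2
    · rw [if_pos h]
      have : (∏ i, if y i ∈ graphF n f then (1:ℝ) else 0) = 1 := by
        refine Finset.prod_eq_one fun i _ => ?_
        rw [if_pos]; simp [graphF, h i]
      rw [this, mul_one]
    · rw [if_neg h]
      push_neg at h
      obtain ⟨i0, hi0⟩ := h
      have : (∏ i, if y i ∈ graphF n f then (1:ℝ) else 0) = 0 := by
        refine Finset.prod_eq_zero (Finset.mem_univ i0) ?_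
        rw [if_neg]; simp [graphF, hi0]
      rw [this, mul_zero]
  have h2 : ∑ y ∈ Finset.univ.filter (fun y : Fin m → VV n => ∀ i, f (y i).1 = (y i).2),
        Ker n m l T y
      = ∑ x : Fin m → XX n, (∑ r : Fin l → Bool,
          if T x (fun i => f (x i)) r then (1:ℝ) else 0) / 2^l := by
    refine Finset.sum_nbij' (fun y => fun i => (y i).1) (fun x => fun i => (x i, f (x i)))
      ?_ ?_ ?_ ?_ ?_
    · intro a _; exact Finset.mem_univ _
    · intro x _
      refine Finset.mem_filter.2 ⟨Finset.mem_univ _, fun i => rfl⟩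
    · intro y hy
      funext i
      have hcond := (Finset.mem_filter.1 hy).2 i
      exact Prod.ext rfl hcond
    · intro x _; rfl
    · intro y hy
      have hcond := (Finset.mem_filter.1 hy).2
      unfold Ker
      congr 1
      refine Finset.sum_congr rfl fun r _ => ?_
      have harg : (fun i => f ((fun j => (y j).1) i)) = fun i => (y i).2 :=
        funext fun i => hcond i
      simp only [harg]
  rw [h1, h2, ← Finset.sum_div, acceptProb, div_div]
  congr 1
  ring


lemma Ker_nonneg (T : (Fin m → XX n) → (Fin m → Bool) → (Fin l → Bool) → Bool)
    (y : Fin m → VV n) : 0 ≤ Ker n m l T y := by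
  unfold Ker
  apply div_nonneg _ (by positivity)
  exact Finset.sum_nonneg fun r _ => by split <;> norm_num

lemma Ker_le_one (T : (Fin m → XX n) → (Fin m → Bool) → (Fin l → Bool) → Bool)
    (y : Fin m → VV n) : Ker n m l T y ≤ 1 := by
  unfold Ker
  rw [div_le_one (by positivity)]
  calc (∑ r : Fin l → Bool, if T (fun i => (y i).1) (fun i => (y i).2) r then (1:ℝ) else 0)
      ≤ ∑ r : Fin l → Bool, 1 := Finset.sum_le_sum fun r _ => by split <;> norm_num
    _ = (2:ℝ)^l := by
        rw [Finset.sum_const, Finset.card_univ]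
        simp [Fintype.card_fun]

lemma key (T : (Fin m → XX n) → (Fin m → Bool) → (Fin l → Bool) → Bool) :
    ∃ (k : ℕ) (S : Fin k → Finset (XX n)),
      k ≤ 2 ^ 2 ^ (10 * m) ∧
      (∀ i j, i ≠ j → Disjoint (S i) (S j)) ∧
      Finset.univ.biUnion S = Finset.univ ∧
      ∀ f g : XX n → Bool, (∀ j, density n (S j) f = density n (S j) g) →
        |acceptProb n m l T f - acceptProb n m l T g| ≤ 1/4 := by
  classical
  set θ : ℝ := (2:ℝ)^(n*m) / 8 with hθdef
  set M : ℝ := (2:ℝ)^(n*m + m) with hMdef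
  set B : ℕ := 2^(2*m+6) with hBdef
  have hθ : 0 < θ := by positivity
  have hM : 0 < M := by positivity
  have hMU : ∀ U : Fin m → Finset (VV n), ip m (tp1 U) (tp1 U) ≤ M := by
    intro U
    refine (ip_tp1_le U).trans ?_
    have hcard : ((Fintype.card (VV n) : ℝ))^m = 2^(n*m+m) := by
      simp only [Fintype.card_prod, Fintype.card_fun, Fintype.card_bool, Fintype.card_fin]
      push_cast
      rw [mul_pow, ← pow_mul, ← pow_add]
    rw [hcard, hMdef]
  set K := Ker n m l T with hK
  have hKK : ip m K K ≤ (B:ℝ) * (θ^2 / M) := by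
    have h1 : ip m K K ≤ (2:ℝ)^(n*m+m) := by
      unfold ip
      calc ∑ y : Fin m → VV n, K y * K y ≤ ∑ y : Fin m → VV n, 1 := by
            refine Finset.sum_le_sum fun y _ => ?_
            have h0 := Ker_nonneg n m l T y
            have h1 := Ker_le_one n m l T y
            rw [← hK] at h0 h1
            nlinarith
        _ = (2:ℝ)^(n*m+m) := by
            rw [Finset.sum_const, Finset.card_univ]
            simp only [Fintype.card_fun, Fintype.card_prod, Fintype.card_bool,
              Fintype.card_fin, nsmul_eq_mul, mul_one]
            push_cast
            rw [mul_pow, ← pow_mul, ← pow_add]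
    have h2 : (B:ℝ) * (θ^2 / M) = (2:ℝ)^(n*m+m) := by
      rw [hBdef, hθdef, hMdef]
      push_cast
      rw [div_pow]
      have h8 : ((8:ℝ))^2 = 2^6 := by norm_num
      rw [h8, ← pow_mul, div_div, ← pow_add, ← mul_div_assoc, ← pow_add,
        div_eq_iff (by positivity : ((2:ℝ))^(6+(n*m+m)) ≠ 0), ← pow_add]
      congr 1
      ring
    rw [h2]; exact h1
  obtain ⟨c, S, hres⟩ := greedy θ M hθ hM hMU B K hKK
  let Sig := Fin B → Fin m → Bool → Bool
  let σ : XX n → Sig := fun x t i b => decide ((x, b) ∈ S t i)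
  let k := Fintype.card Sig
  let e : Sig ≃ Fin k := Fintype.equivFin Sig
  let parts : Fin k → Finset (XX n) :=
    fun j => Finset.univ.filter (fun x => e (σ x) = j)
  refine ⟨k, parts, ?_, ?_, ?_, ?_⟩
  · -- cardinality bound
    have hkval : k = 2^(2*m*B) := by
      show Fintype.card Sig = _
      simp only [Sig, Fintype.card_fun, Fintype.card_bool, Fintype.card_fin]
      rw [← pow_mul, ← pow_mul]
      congr 1
      ring
    rw [hkval]
    apply Nat.pow_le_pow_right (by norm_num)
    rcases Nat.eq_zero_or_pos m with hm | hm
    · simp [hm]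
    · have hm2 : m ≤ 2^m := Nat.le_of_lt (Nat.lt_two_pow_self)
      calc 2*m*B ≤ 2*2^m*2^(2*m+6) := by
            rw [hBdef]
            exact Nat.mul_le_mul_right _ (Nat.mul_le_mul_left _ hm2)
        _ = 2^(m+1+(2*m+6)) := by
            rw [pow_add, pow_add]
            ring
        _ ≤ 2^(10*m) := Nat.pow_le_pow_right (by norm_num) (by omega)
  · intro i j hij
    rw [Finset.disjoint_left]
    intro x hxi hxj
    exact hij (((Finset.mem_filter.1 hxi).2).symm.trans (Finset.mem_filter.1 hxj).2)
  · apply Finset.eq_univ_iff_forall.2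
    intro x
    exact Finset.mem_biUnion.2
      ⟨e (σ x), Finset.mem_univ _, Finset.mem_filter.2 ⟨Finset.mem_univ _, rfl⟩⟩
  · intro f g hfg
    have h2n : ((2:ℝ)^n) ≠ 0 := by positivity
    have hone : ∀ j, ∑ x ∈ parts j, (if f x then (1:ℝ) else 0)
        = ∑ x ∈ parts j, (if g x then (1:ℝ) else 0) := by
      intro j
      have hd := hfg j
      unfold density at hd
      rw [div_eq_div_iff (by positivity) (by positivity)] at hd
      exact mul_right_cancel₀ h2n hd
    have hzero : ∀ j, ∑ x ∈ parts j, (if f x then (0:ℝ) else 1)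
        = ∑ x ∈ parts j, (if g x then (0:ℝ) else 1) := by
      intro j
      have hcompl : ∀ h : XX n → Bool, ∑ x ∈ parts j, (if h x then (0:ℝ) else 1)
          = (parts j).card - ∑ x ∈ parts j, (if h x then (1:ℝ) else 0) := by
        intro h
        rw [eq_sub_iff_add_eq, ← Finset.sum_add_distrib]
        have : ∀ x ∈ parts j, ((if h x then (0:ℝ) else 1) + if h x then (1:ℝ) else 0) = 1 := by
          intro x _; split <;> norm_num
        rw [Finset.sum_congr rfl this, Finset.sum_const, nsmul_eq_mul, mul_one]
      rw [hcompl f, hcompl g, hone j]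
    have hmemS : ∀ (t : Fin B) (i : Fin m) (b : Bool) (j : Fin k), ∀ x ∈ parts j,
        (if (x,b) ∈ S t i then (1:ℝ) else 0)
          = (if e.symm j t i b then (1:ℝ) else 0) := by
      intro t i b j x hx
      have hxj : e (σ x) = j := (Finset.mem_filter.1 hx).2
      have hσ : σ x = e.symm j := by
        rw [← hxj, Equiv.symm_apply_apply]
      have : ((x,b) ∈ S t i) ↔ (e.symm j t i b = true) := by
        rw [← hσ]
        simp [σ]
      rw [if_congr this rfl rfl]
    have hsplit : ∀ (t : Fin B) (i : Fin m) (h : XX n → Bool),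
        (∑ v : VV n, (if v ∈ S t i then (1:ℝ) else 0) * (if v ∈ graphF n h then 1 else 0))
        = ∑ j, ((if e.symm j t i true then (1:ℝ) else 0)
                  * (∑ x ∈ parts j, if h x then (1:ℝ) else 0)
              + (if e.symm j t i false then (1:ℝ) else 0)
                  * (∑ x ∈ parts j, if h x then (0:ℝ) else 1)) := by
      intro t i h
      have step1 : (∑ v : VV n, (if v ∈ S t i then (1:ℝ) else 0) * (if v ∈ graphF n h then 1 else 0))
          = ∑ x : XX n, ((if (x,true) ∈ S t i then (1:ℝ) else 0) * (if h x then 1 else 0)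
              + (if (x,false) ∈ S t i then (1:ℝ) else 0) * (if h x then 0 else 1)) := by
        rw [Fintype.sum_prod_type]
        refine Finset.sum_congr rfl fun x _ => ?_
        rw [Fintype.sum_bool]
        have e1 : ((x, true) ∈ graphF n h) ↔ (h x = true) := by simp [graphF]
        have e0 : ((x, false) ∈ graphF n h) ↔ (h x = false) := by simp [graphF]
        rw [if_congr e1 rfl rfl, if_congr e0 rfl rfl]
        cases hx : h x <;> simp
      rw [step1]
      rw [← Finset.sum_fiberwise Finset.univ (fun x => e (σ x))]
      refine Finset.sum_congr rfl fun j _ => ?_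
      have step2 : ∀ x ∈ parts j,
          ((if (x,true) ∈ S t i then (1:ℝ) else 0) * (if h x then 1 else 0)
            + (if (x,false) ∈ S t i then (1:ℝ) else 0) * (if h x then 0 else 1))
          = ((if e.symm j t i true then (1:ℝ) else 0) * (if h x then 1 else 0)
            + (if e.symm j t i false then (1:ℝ) else 0) * (if h x then 0 else 1)) := by
        intro x hx
        rw [hmemS t i true j x hx, hmemS t i false j x hx]
      rw [show (Finset.univ.filter fun x => e (σ x) = j) = parts j from rfl]
      rw [Finset.sum_congr rfl step2, Finset.sum_add_distrib, Finset.mul_sum, Finset.mul_sum]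
    have hcut : ∀ (t : Fin B) (i : Fin m),
        (∑ v : VV n, (if v ∈ S t i then (1:ℝ) else 0) * (if v ∈ graphF n f then 1 else 0))
        = ∑ v : VV n, (if v ∈ S t i then (1:ℝ) else 0) * (if v ∈ graphF n g then 1 else 0) := by
      intro t i
      rw [hsplit t i f, hsplit t i g]
      refine Finset.sum_congr rfl fun j _ => ?_
      rw [hone j, hzero j]
    -- decomposition part of ip is equal for f and g
    have hDip : ∀ h : XX n → Bool,
        ip m (fun y => ∑ t, c t * tp1 (S t) y) (tp1 (fun _ => graphF n h))
          = ∑ t, c t * ∏ i, ∑ v : VV n,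
              (if v ∈ S t i then (1:ℝ) else 0) * (if v ∈ graphF n h then 1 else 0) := by
      intro h
      rw [ip_sum_left (fun t => fun y => c t * tp1 (S t) y)]
      refine Finset.sum_congr rfl fun t _ => ?_
      rw [ip_smul_left, ip_tp1_factor]
    have hDeq : ip m (fun y => ∑ t, c t * tp1 (S t) y) (tp1 (fun _ => graphF n f))
        = ip m (fun y => ∑ t, c t * tp1 (S t) y) (tp1 (fun _ => graphF n g)) := by
      rw [hDip f, hDip g]
      refine Finset.sum_congr rfl fun t _ => ?_
      congr 1
      exact Finset.prod_congr rfl fun i _ => hcut t i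
    have hsub : ∀ u : (Fin m → VV n) → ℝ,
        ip m (fun y => K y - ∑ t, c t * tp1 (S t) y) u
          = ip m K u - ip m (fun y => ∑ t, c t * tp1 (S t) y) u :=
      fun u => ip_sub_left K (fun y => ∑ t, c t * tp1 (S t) y) u
    have hrf := hres (fun _ => graphF n f)
    have hrg := hres (fun _ => graphF n g)
    rw [hsub] at hrf hrg
    rw [accept_eq n m l T f, accept_eq n m l T g, div_sub_div_same, abs_div,
      abs_of_pos (by positivity : (0:ℝ) < 2^(n*m)), div_le_iff₀ (by positivity)]
    have hdiffeq : ip m K (tp1 fun _ => graphF n f) - ip m K (tp1 fun _ => graphF n g)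
        = (ip m K (tp1 fun _ => graphF n f)
            - ip m (fun y => ∑ t, c t * tp1 (S t) y) (tp1 fun _ => graphF n f))
          - (ip m K (tp1 fun _ => graphF n g)
            - ip m (fun y => ∑ t, c t * tp1 (S t) y) (tp1 fun _ => graphF n g)) := by
      rw [hDeq]; ring
    rw [hdiffeq]
    have habs := abs_sub _ _ |>.trans (add_le_add hrf hrg)
    have hfin : θ + θ = 1/4 * 2^(n*m) := by rw [hθdef]; ring
    exact habs.trans (le_of_eq hfin)

end Stmt13Key

/-- **Testability implies symmetry.** There is a universal constant `C` such that if a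
property `P` of Boolean functions on `{0,1}^n` is testable with proximity `ε` using `m`
samples, then there are `k ≤ 2^(2^(C·m))`, a partition `S 1, …, S k` of `{0,1}^n`, and a
property `Q` that is `k`-part symmetric with respect to this partition (membership in
`Q` depends only on the vector of densities) with `P ⊆ Q ⊆ P_ε`. -/
theorem stmt_13 : ∃ C : ℕ, 0 < C ∧
    ∀ (n m l : ℕ) (ε : ℝ), 0 < ε →
    ∀ (P : Set ((Fin n → Bool) → Bool))
      (T : (Fin m → (Fin n → Bool)) → (Fin m → Bool) → (Fin l → Bool) → Bool),
      isValidTester n m l P ε T →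
      ∃ (k : ℕ) (S : Fin k → Finset (Fin n → Bool)) (Q : Set ((Fin n → Bool) → Bool)),
        k ≤ 2 ^ 2 ^ (C * m) ∧
        (∀ i j, i ≠ j → Disjoint (S i) (S j)) ∧
        Finset.univ.biUnion S = Finset.univ ∧
        (∀ f g : (Fin n → Bool) → Bool,
          (∀ j, density n (S j) f = density n (S j) g) → (f ∈ Q ↔ g ∈ Q)) ∧
        P ⊆ Q ∧ Q ⊆ closeTo n P ε := by
  refine ⟨10, by norm_num, ?_⟩
  intro n m l ε hε P T hT
  obtain ⟨k, S, hk, hdisj, hcover, hdiff⟩ := Stmt13Key.key n m l T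
  refine ⟨k, S, {g | ∃ f ∈ P, ∀ j, density n (S j) f = density n (S j) g},
    hk, hdisj, hcover, ?_, ?_, ?_⟩
  · intro f g hfg
    constructor
    · rintro ⟨h, hh, hd⟩; exact ⟨h, hh, fun j => (hd j).trans (hfg j)⟩
    · rintro ⟨h, hh, hd⟩; exact ⟨h, hh, fun j => (hd j).trans (hfg j).symm⟩
  · intro f hf; exact ⟨f, hf, fun j => rfl⟩
  · rintro g ⟨f, hf, hd⟩
    by_contra hg
    have h1 := hT.1 f hf
    have h2 := hT.2 g hg
    have h3 := hdiff f g hd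
    have h4 := abs_le.1 h3
    linarith [h4.1, h4.2]
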